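/- arXiv:2102.04787 — 2 statements merged into one kernel-verified Lean document; each statement's English description precedes it below -/
import Mathlib

section
/- Let S ⊆ ℕ, let f₀ denote a fixed distinguished element, and let A = {(2n, f₀) : n ∈ ℕ} ∪ {(2n+1, w) : n ∈ S, w = w_n} where for each n ∈ S, w_n is some fixed element with w_n ≠ f₀. Define F : A → ℕ by F((k, x)) = k and G : ℕ → A by G(n) = (2n, f₀); both are injective. Then for any bijection H : A → ℕ satisfying the canonical witness property (for all a ∈ A, H(a) = F(a) or G(H(a)) = a), we have for every n ∈ ℕ: n ∈ S if and only if H((2(2n+1), f₀)) = 2(2n+1). -/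
theorem stmt_11 (α : Type) (f₀ : α) (S : Set ℕ) (w : ℕ → α)
    (hw : ∀ n ∈ S, w n ≠ f₀)
    (A : Set (ℕ × α))
    (hA : A = {p | (∃ n : ℕ, p = (2 * n, f₀)) ∨ (∃ n ∈ S, p = (2 * n + 1, w n))})
    (H : A → ℕ)
    (hbij : Function.Bijective H)
    (hcanon : ∀ a : A, H a = (a : ℕ × α).1 ∨ ((2 * H a, f₀) : ℕ × α) = (a : ℕ × α)) :
    ∀ n : ℕ, n ∈ S ↔
      H ⟨(2 * (2 * n + 1), f₀), by rw [hA]; exact Or.inl ⟨2 * n + 1, rfl⟩⟩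
        = 2 * (2 * n + 1) := by
  intro n
  set a : A := ⟨(2 * (2 * n + 1), f₀), by rw [hA]; exact Or.inl ⟨2 * n + 1, rfl⟩⟩ with ha
  constructor
  · intro hn
    have hbA : (2 * n + 1, w n) ∈ A := by rw [hA]; exact Or.inr ⟨n, hn, rfl⟩
    set b : A := ⟨(2 * n + 1, w n), hbA⟩ with hb
    have hHb : H b = 2 * n + 1 := by
      rcases hcanon b with h | h
      · exact h
      · exfalso
        have : 2 * H b = 2 * n + 1 := congrArg Prod.fst h
        omega
    rcases hcanon a with h | h
    · exact h
    · exfalso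
      have h1 : 2 * H a = 2 * (2 * n + 1) := congrArg Prod.fst h
      have h2 : H a = 2 * n + 1 := by omega
      have : a = b := hbij.1 (h2.trans hHb.symm)
      have : (a : ℕ × α).1 = (b : ℕ × α).1 := by rw [this]
      simp only [ha, hb] at this
      omega
  · intro hHa
    by_contra hn
    obtain ⟨c, hc⟩ := hbij.2 (2 * n + 1)
    rcases hcanon c with h | h
    · -- c.1 = 2n+1, so c is an odd element, forcing n ∈ S
      have hc1 : (c : ℕ × α).1 = 2 * n + 1 := by rw [← h, hc]
      have hcA : (↑c : ℕ × α) ∈ {p : ℕ × α | (∃ n : ℕ, p = (2 * n, f₀)) ∨ (∃ n ∈ S, p = (2 * n + 1, w n))} := by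
        rw [← hA]; exact c.2
      rcases hcA with ⟨m, hm⟩ | ⟨m, hmS, hm⟩
      · have := congrArg Prod.fst hm
        simp at this; omega
      · have h1 := congrArg Prod.fst hm
        simp only at h1
        have : m = n := by omega
        exact hn (this ▸ hmS)
    · -- c = a, so H a = 2n+1 ≠ 2(2n+1)
      rw [hc] at h
      have hca : c = a := Subtype.ext h.symm
      rw [hca, hHa] at hc
      omega
end

section
/- The block-coding map on Cantor space is a strictly monotone order embedding for the lexicographic order: define c : (ℕ → Bool) → (ℕ → Bool) by replacing each bit 0 of the input by the block 1,0,0,1 and each bit 1 by the block 1,0,1 (concatenating the blocks in order). Then for all f, g : ℕ → Bool, f < g in the lexicographic order if and only if c(f) < c(g) in the lexicographic order. -/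
/-- The block assigned to a bit: `false ↦ [1,0,0,1]`, `true ↦ [1,0,1]`. -/
def block (b : Bool) : List Bool :=
  if b then [true, false, true] else [true, false, false, true]

/-- The concatenation of the blocks of the first `n` bits of `f`. -/
def codePrefix (f : ℕ → Bool) (n : ℕ) : List Bool :=
  ((List.range n).map (fun i => block (f i))).flatten

/-- The block-coding map on Cantor space: replace each bit `0` by `1,0,0,1`
and each bit `1` by `1,0,1`, concatenating the blocks in order. -/
def code (f : ℕ → Bool) (k : ℕ) : Bool :=
  (codePrefix f (k + 1)).getD k false

/-- The lexicographic strict order on Cantor space. -/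
def lexLt (f g : ℕ → Bool) : Prop :=
  ∃ n, (∀ k < n, f k = g k) ∧ f n = false ∧ g n = true

lemma codePrefix_succ (f : ℕ → Bool) (n : ℕ) :
    codePrefix f (n + 1) = codePrefix f n ++ block (f n) := by
  simp [codePrefix, List.range_succ]

lemma le_length_codePrefix (f : ℕ → Bool) (n : ℕ) : n ≤ (codePrefix f n).length := by
  induction n with
  | zero => simp [codePrefix]
  | succ n ih =>
    rw [codePrefix_succ, List.length_append]
    have : 1 ≤ (block (f n)).length := by cases f n <;> simp [block]
    omega

lemma codePrefix_prefix (f : ℕ → Bool) {m n : ℕ} (h : m ≤ n) :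
    codePrefix f m <+: codePrefix f n := by
  induction n with
  | zero => simp_all
  | succ n ih =>
    rcases Nat.eq_or_lt_of_le h with h' | h'
    · exact h' ▸ List.prefix_refl _
    · exact (ih (Nat.lt_succ_iff.mp h')).trans (codePrefix_succ f n ▸ List.prefix_append _ _)

lemma getD_of_prefix {l₁ l₂ : List Bool} (h : l₁ <+: l₂) {k : ℕ} (hk : k < l₁.length) :
    l₂.getD k false = l₁.getD k false := by
  obtain ⟨t, rfl⟩ := h
  have hk2 : k < (l₁ ++ t).length := by simp; omega
  rw [List.getD_eq_getElem _ _ hk, List.getD_eq_getElem _ _ hk2,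
    List.getElem_append_left hk]

lemma code_eq (f : ℕ → Bool) {k m : ℕ} (hk : k < (codePrefix f m).length) :
    code f k = (codePrefix f m).getD k false := by
  have hself : k < (codePrefix f (k + 1)).length :=
    lt_of_lt_of_le (Nat.lt_succ_self k) (le_length_codePrefix f (k + 1))
  unfold code
  rcases le_total (k + 1) m with h | h
  · exact (getD_of_prefix (codePrefix_prefix f h) hself).symm
  · exact getD_of_prefix (codePrefix_prefix f h) hk

lemma codePrefix_congr {f g : ℕ → Bool} {n : ℕ} (h : ∀ k < n, f k = g k) :
    codePrefix f n = codePrefix g n := by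
  unfold codePrefix
  congr 1
  apply List.map_congr_left
  intro i hi
  rw [h i (List.mem_range.mp hi)]

lemma getD_append_right (L l : List Bool) (i : ℕ) :
    (L ++ l).getD (L.length + i) false = l.getD i false := by
  rw [List.getD_eq_getElem?_getD, List.getD_eq_getElem?_getD,
    List.getElem?_append_right (by omega)]
  simp

lemma lexLt_forward {f g : ℕ → Bool} (h : lexLt f g) : lexLt (code f) (code g) := by
  obtain ⟨n, hagree, hf, hg⟩ := h
  set L := codePrefix f n with hL
  have hLg : codePrefix g n = L := (codePrefix_congr hagree).symm
  have hfs : codePrefix f (n + 1) = L ++ [true, false, false, true] := by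
    rw [codePrefix_succ, hf]; rfl
  have hgs : codePrefix g (n + 1) = L ++ [true, false, true] := by
    rw [codePrefix_succ, hg, hLg]; rfl
  have hflen : L.length + 2 < (codePrefix f (n + 1)).length := by
    rw [hfs]; simp
  have hglen : L.length + 2 < (codePrefix g (n + 1)).length := by
    rw [hgs]; simp
  refine ⟨L.length + 2, ?_, ?_, ?_⟩
  · intro k hk
    rcases (by omega : k < L.length ∨ k = L.length ∨ k = L.length + 1) with hk' | hk' | hk'
    · rw [code_eq f (m := n) (hL ▸ hk'), code_eq g (m := n) (hLg ▸ hk'), hLg]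
    · subst hk'
      rw [code_eq f (m := n + 1) (by omega), code_eq g (m := n + 1) (by omega),
        hfs, hgs]
      have h1 := getD_append_right L [true, false, false, true] 0
      have h2 := getD_append_right L [true, false, true] 0
      rw [Nat.add_zero] at h1 h2
      rw [h1, h2]
      rfl
    · subst hk'
      rw [code_eq f (m := n + 1) (by omega), code_eq g (m := n + 1) (by omega),
        hfs, hgs, getD_append_right, getD_append_right]
      rfl
  · rw [code_eq f (m := n + 1) hflen, hfs, getD_append_right]
    rfl
  · rw [code_eq g (m := n + 1) hglen, hgs, getD_append_right]
    rfl

lemma lexLt_asymm {f g : ℕ → Bool} (h1 : lexLt f g) (h2 : lexLt g f) : False := by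
  obtain ⟨n, ha, hf, hg⟩ := h1
  obtain ⟨m, hb, hg', hf'⟩ := h2
  rcases lt_trichotomy n m with h | h | h
  · have := hb n h; simp_all
  · subst h; simp_all
  · have := ha m h; simp_all

lemma lexLt_trichotomy (f g : ℕ → Bool) : lexLt f g ∨ f = g ∨ lexLt g f := by
  by_cases h : f = g
  · exact Or.inr (Or.inl h)
  · have hne : ∃ n, f n ≠ g n := by
      by_contra hc
      push_neg at hc
      exact h (funext hc)
    classical
    let n := Nat.find hne
    have hn : f n ≠ g n := Nat.find_spec hne
    have hmin : ∀ k < n, f k = g k := fun k hk => by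
      by_contra hc
      exact absurd hk (not_lt.mpr (Nat.find_le hc))
    cases hfn : f n with
    | false =>
      left
      exact ⟨n, hmin, hfn, by revert hn; rw [hfn]; cases g n <;> simp⟩
    | true =>
      right; right
      exact ⟨n, fun k hk => (hmin k hk).symm, by revert hn; rw [hfn]; cases g n <;> simp, hfn⟩

theorem stmt_18 (f g : ℕ → Bool) :
    lexLt f g ↔ lexLt (code f) (code g) := by
  constructor
  · exact lexLt_forward
  · intro h
    rcases lexLt_trichotomy f g with h1 | h1 | h1
    · exact h1
    · subst h1
      exact absurd h (fun hh => lexLt_asymm hh hh)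
    · exact absurd (lexLt_forward h1) (fun hh => (lexLt_asymm h hh))
end
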